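/- Let K and L be colored regularity graphs and let K ∨ L be the CRG formed by taking their disjoint union and joining all pairs of vertices from K to L by gray edges. Then for every p ∈ (0,1), 1/g_{K∨L}(p) = 1/g_K(p) + 1/g_L(p), where g is defined as the minimum of the quadratic form ⟨μ, M(p)μ⟩ over probability vectors μ. -/

import Mathlib

open Finset

inductive EColor | white | black | gray
deriving DecidableEq

/-- The `p`-weight of an edge color: `p` for white, `1-p` for black, `0` for gray. -/
def wval (p : ℝ) : EColor → ℝ
  | .white => p
  | .black => 1 - p
  | .gray => 0

/-- The matrix `M_K(p)` of a CRG given by vertex colors `vb` (`true` = black)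
and edge colors `ec`. -/
def Mmat {V : Type*} [DecidableEq V] (vb : V → Bool) (ec : V → V → EColor) (p : ℝ)
    (x y : V) : ℝ :=
  if x = y then (if vb x then 1 - p else p) else wval p (ec x y)

/-- `μ` is a probability mass. -/
def IsProb {V : Type*} [Fintype V] (μ : V → ℝ) : Prop :=
  (∀ x, 0 ≤ μ x) ∧ ∑ x, μ x = 1

/-- The quadratic form `⟨μ, M_K(p) μ⟩`. -/
def QF {V : Type*} [Fintype V] [DecidableEq V] (vb : V → Bool) (ec : V → V → EColor)
    (p : ℝ) (μ : V → ℝ) : ℝ :=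
  ∑ x, ∑ y, μ x * Mmat vb ec p x y * μ y

/-- `g` is the minimum of the quadratic form over probability masses, i.e. `g = g_K(p)`. -/
def gIs {V : Type*} [Fintype V] [DecidableEq V] (vb : V → Bool) (ec : V → V → EColor)
    (p g : ℝ) : Prop :=
  IsLeast {t | ∃ μ : V → ℝ, IsProb μ ∧ t = QF vb ec p μ} g

/-- The weighted gray-degree `d_G(u) = ∑_{v : uv gray} μ(v)`. -/
def grayDeg {V : Type*} [Fintype V] [DecidableEq V] (ec : V → V → EColor) (μ : V → ℝ)
    (u : V) : ℝ :=
  ∑ v ∈ Finset.univ.filter (fun v => v ≠ u ∧ ec u v = EColor.gray), μ v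

/-- The edge-coloring of the gray join `K ∨ L`. -/
def joinEC {V W : Type*} (ecK : V → V → EColor) (ecL : W → W → EColor) :
    V ⊕ W → V ⊕ W → EColor
  | .inl a, .inl b => ecK a b
  | .inr a, .inr b => ecL a b
  | _, _ => .gray


lemma QF_smul {V : Type*} [Fintype V] [DecidableEq V] (vb : V → Bool) (ec : V → V → EColor)
    (p c : ℝ) (μ : V → ℝ) :
    QF vb ec p (fun x => c * μ x) = c ^ 2 * QF vb ec p μ := by
  simp only [QF, Finset.mul_sum]
  exact Finset.sum_congr rfl fun x _ => Finset.sum_congr rfl fun y _ => by ring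

lemma QF_ge {V : Type*} [Fintype V] [DecidableEq V] (vb : V → Bool) (ec : V → V → EColor)
    (p g : ℝ) (hg : gIs vb ec p g) (μ : V → ℝ) (hμ : ∀ x, 0 ≤ μ x) :
    (∑ x, μ x) ^ 2 * g ≤ QF vb ec p μ := by
  set s := ∑ x, μ x with hs
  have hs0 : 0 ≤ s := Finset.sum_nonneg fun x _ => hμ x
  rcases eq_or_lt_of_le hs0 with h0 | hpos
  · have hz : ∀ x ∈ Finset.univ, μ x = 0 :=
      (Finset.sum_eq_zero_iff_of_nonneg fun x _ => hμ x).1 h0.symm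
    have : QF vb ec p μ = 0 := by
      unfold QF
      refine Finset.sum_eq_zero fun x hx => Finset.sum_eq_zero fun y hy => ?_
      rw [hz x hx]; ring
    rw [this, ← h0]; norm_num
  · have hν : IsProb (fun x => (1 / s) * μ x) := by
      constructor
      · intro x; exact mul_nonneg (div_nonneg zero_le_one hs0) (hμ x)
      · rw [← Finset.mul_sum, ← hs]; field_simp
    have hle : g ≤ QF vb ec p (fun x => (1 / s) * μ x) :=
      hg.2 ⟨_, hν, rfl⟩
    rw [QF_smul] at hle
    have hs2 : (0:ℝ) < s ^ 2 := by positivity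
    have h3 := mul_le_mul_of_nonneg_left hle hs2.le
    have h4 : s ^ 2 * ((1 / s) ^ 2 * QF vb ec p μ) = QF vb ec p μ := by
      field_simp
    linarith

lemma QF_join {V W : Type*} [Fintype V] [DecidableEq V] [Fintype W] [DecidableEq W]
    (vbK : V → Bool) (ecK : V → V → EColor) (vbL : W → Bool) (ecL : W → W → EColor)
    (p : ℝ) (μ : V ⊕ W → ℝ) :
    QF (Sum.elim vbK vbL) (joinEC ecK ecL) p μ
      = QF vbK ecK p (fun x => μ (Sum.inl x)) + QF vbL ecL p (fun y => μ (Sum.inr y)) := by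
  simp [QF, Fintype.sum_sum_type, Mmat, joinEC, wval, Finset.sum_add_distrib]
  congr 1

/-- for the gray join `K ∨ L`, `1/g_{K∨L}(p) = 1/g_K(p) + 1/g_L(p)`. -/
theorem stmt1 {V W : Type*} [Fintype V] [DecidableEq V] [Fintype W] [DecidableEq W]
    (vbK : V → Bool) (ecK : V → V → EColor) (vbL : W → Bool) (ecL : W → W → EColor)
    (p gK gL gJ : ℝ) (hp0 : 0 < p) (hp1 : p < 1)
    (hgK : gIs vbK ecK p gK) (hgL : gIs vbL ecL p gL)
    (hKpos : 0 < gK) (hLpos : 0 < gL)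
    (hgJ : gIs (Sum.elim vbK vbL) (joinEC ecK ecL) p gJ) :
    1 / gJ = 1 / gK + 1 / gL := by
  obtain ⟨μK, hμK, hQK⟩ := hgK.1
  obtain ⟨μL, hμL, hQL⟩ := hgL.1
  have hsum : 0 < gK + gL := by linarith
  set a : ℝ := gL / (gK + gL) with ha
  set b : ℝ := gK / (gK + gL) with hb
  have ha0 : 0 ≤ a := by positivity
  have hb0 : 0 ≤ b := by positivity
  -- upper bound
  have hub : gJ ≤ gK * gL / (gK + gL) := by
    have hμJ : IsProb (Sum.elim (fun x => a * μK x) (fun y => b * μL y)) := by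
      constructor
      · rintro (x | y)
        · exact mul_nonneg ha0 (hμK.1 x)
        · exact mul_nonneg hb0 (hμL.1 y)
      · rw [Fintype.sum_sum_type]
        simp only [Sum.elim_inl, Sum.elim_inr, ← Finset.mul_sum, hμK.2, hμL.2,
          mul_one]
        rw [ha, hb]
        field_simp
        ring
    have hmem : QF (Sum.elim vbK vbL) (joinEC ecK ecL) p
        (Sum.elim (fun x => a * μK x) (fun y => b * μL y)) ∈
        {t | ∃ μ : V ⊕ W → ℝ, IsProb μ ∧ t = QF (Sum.elim vbK vbL) (joinEC ecK ecL) p μ} :=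
      ⟨_, hμJ, rfl⟩
    have := hgJ.2 hmem
    rw [QF_join] at this
    simp only [Sum.elim_inl, Sum.elim_inr] at this
    rw [QF_smul, QF_smul, ← hQK, ← hQL] at this
    calc gJ ≤ a ^ 2 * gK + b ^ 2 * gL := this
      _ = gK * gL / (gK + gL) := by rw [ha, hb]; field_simp; ring
  -- lower bound
  have hlb : gK * gL / (gK + gL) ≤ gJ := by
    obtain ⟨μ, hμ, hQ⟩ := hgJ.1
    rw [hQ, QF_join]
    set sa := ∑ x, μ (Sum.inl x) with hsa
    set sb := ∑ y, μ (Sum.inr y) with hsb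
    have h1 : sa + sb = 1 := by
      rw [hsa, hsb, ← Fintype.sum_sum_type]; exact hμ.2
    have hK := QF_ge vbK ecK p gK hgK (fun x => μ (Sum.inl x)) (fun x => hμ.1 _)
    have hL := QF_ge vbL ecL p gL hgL (fun y => μ (Sum.inr y)) (fun y => hμ.1 _)
    rw [← hsa] at hK
    rw [← hsb] at hL
    have key : gK * gL / (gK + gL) ≤ sa ^ 2 * gK + sb ^ 2 * gL := by
      rw [div_le_iff₀ hsum]
      have h2 : gK * gL = gK * gL * (sa + sb) ^ 2 := by rw [h1]; ring
      nlinarith [sq_nonneg (sa * gK - sb * gL), h2]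
    linarith
  have hJ : gJ = gK * gL / (gK + gL) := le_antisymm hub hlb
  have hJpos : 0 < gJ := by rw [hJ]; positivity
  rw [hJ]
  field_simp
  ring
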